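/- Let G be a graph of order p+5 not containing the book B_p. If P is a path in the complement Ḡ all of whose internal vertices have degree 2 in Ḡ, then P has length at most 3. -/

import Mathlib

open SimpleGraph

/-- A graph contains the book `B_p` iff some edge has at least `p` common neighbors. -/
def SimpleGraph.ContainsBook {V : Type*} (G : SimpleGraph V) (p : ℕ) : Prop :=
  ∃ x y, G.Adj x y ∧ p ≤ (G.commonNeighbors x y).ncard

/-- The Turán number `ex(n, B_p)`: the maximum number of edges of a simple graph
on `n` vertices containing no book `B_p`. -/
noncomputable def bookTuranNumber (n p : ℕ) : ℕ :=
  sSup {e : ℕ | ∃ G : SimpleGraph (Fin n), ¬ G.ContainsBook p ∧ G.edgeSet.ncard = e}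

/-- The disjoint union of `m` copies of the complete graph `K_k`. -/
def unionComplete (m k : ℕ) : SimpleGraph (Fin m × Fin k) :=
  SimpleGraph.fromRel fun a b => a.1 = b.1

/-- The join `G ∨ H` of two graphs. -/
def SimpleGraph.join {α β : Type*} (G : SimpleGraph α) (H : SimpleGraph β) :
    SimpleGraph (α ⊕ β) := (Gᶜ ⊕g Hᶜ)ᶜ

/-- A disjoint union of cycles `C_{i 0} + ⋯ + C_{i (t-1)}`. -/
def cycleFamily (t : ℕ) (i : Fin t → ℕ) : SimpleGraph (Σ j : Fin t, Fin (i j)) :=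
  SimpleGraph.fromRel fun a b => ∃ h : a.1 = b.1, (SimpleGraph.cycleGraph (i b.1)).Adj (h ▸ a.2) b.2

lemma getVert_support_getElem? {V : Type*} {G : SimpleGraph V} {u v : V}
    (w : G.Walk u v) {i : ℕ} (hi : i ≤ w.length) :
    w.support[i]? = some (w.getVert i) := by
  induction w generalizing i with
  | nil => simp only [SimpleGraph.Walk.length_nil, Nat.le_zero] at hi; subst hi; simp [SimpleGraph.Walk.getVert]
  | cons h p ih =>
    cases i with
    | zero => simp [SimpleGraph.Walk.getVert]
    | succ n =>
      simp only [SimpleGraph.Walk.support_cons, SimpleGraph.Walk.getVert_cons_succ,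
        List.getElem?_cons_succ]
      exact ih (by simpa using hi)

lemma path_getVert_inj {V : Type*} {G : SimpleGraph V} {u v : V}
    {w : G.Walk u v} (hw : w.IsPath) {i j : ℕ} (hi : i ≤ w.length) (hj : j ≤ w.length)
    (h : w.getVert i = w.getVert j) : i = j := by
  have h1 := getVert_support_getElem? w hi
  have h2 := getVert_support_getElem? w hj
  rw [h] at h1
  exact (List.getElem?_inj (by simpa using Nat.lt_succ_of_le hi) hw.support_nodup).1 (h1.trans h2.symm)

theorem stmt17 (p : ℕ) {V : Type*} [Fintype V] (hV : Fintype.card V = p + 5)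
    (G : SimpleGraph V) (hfree : ¬ G.ContainsBook p) (u v : V) (P : Gᶜ.Walk u v)
    (hP : P.IsPath) (hint : ∀ w ∈ P.support, w ≠ u → w ≠ v → (Gᶜ.neighborSet w).ncard = 2) :
    P.length ≤ 3 := by
  by_contra hlen
  push_neg at hlen
  have hlen4 : 4 ≤ P.length := hlen
  have hne : ∀ i j : ℕ, i ≤ P.length → j ≤ P.length → i ≠ j →
      P.getVert i ≠ P.getVert j := by
    intro i j hi hj hij h
    exact hij (path_getVert_inj hP hi hj h)
  obtain ⟨a, ha⟩ : ∃ a, P.getVert 1 = a := ⟨_, rfl⟩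
  obtain ⟨b, hb⟩ : ∃ b, P.getVert 2 = b := ⟨_, rfl⟩
  obtain ⟨c, hc⟩ : ∃ c, P.getVert 3 = c := ⟨_, rfl⟩
  obtain ⟨d, hd⟩ : ∃ d, P.getVert 4 = d := ⟨_, rfl⟩
  have hu : P.getVert 0 = u := P.getVert_zero
  have hv : P.getVert P.length = v := P.getVert_length
  have h1 : (1:ℕ) ≤ P.length := by omega
  have h2 : (2:ℕ) ≤ P.length := by omega
  have h3 : (3:ℕ) ≤ P.length := by omega
  have h4 : (4:ℕ) ≤ P.length := by omega
  -- adjacencies along the path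
  have hau : Gᶜ.Adj a u := by
    rw [← hu, ← ha]; exact (P.adj_getVert_succ (by omega)).symm
  have hab : Gᶜ.Adj a b := by rw [← ha, ← hb]; exact P.adj_getVert_succ (by omega)
  have hcb : Gᶜ.Adj c b := by rw [← hb, ← hc]; exact (P.adj_getVert_succ (by omega)).symm
  have hcd : Gᶜ.Adj c d := by rw [← hc, ← hd]; exact P.adj_getVert_succ (by omega)
  -- distinctness
  have hav : a ≠ v := by rw [← hv, ← ha]; exact hne 1 P.length h1 le_rfl (by omega)
  have hcv : c ≠ v := by rw [← hv, ← hc]; exact hne 3 P.length h3 le_rfl (by omega)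
  have hua : u ≠ a := by rw [← hu, ← ha]; exact hne 0 1 (by omega) h1 (by omega)
  have hub : u ≠ b := by rw [← hu, ← hb]; exact hne 0 2 (by omega) h2 (by omega)
  have huc : u ≠ c := by rw [← hu, ← hc]; exact hne 0 3 (by omega) h3 (by omega)
  have hbd : b ≠ d := by rw [← hb, ← hd]; exact hne 2 4 h2 h4 (by omega)
  have hac : a ≠ c := by rw [← ha, ← hc]; exact hne 1 3 h1 h3 (by omega)
  have hbc : b ≠ c := by rw [← hb, ← hc]; exact hne 2 3 h2 h3 (by omega)
  -- degrees
  have hamem : a ∈ P.support := SimpleGraph.Walk.mem_support_iff_exists_getVert.2 ⟨1, ha, h1⟩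
  have hcmem : c ∈ P.support := SimpleGraph.Walk.mem_support_iff_exists_getVert.2 ⟨3, hc, h3⟩
  have hdega : (Gᶜ.neighborSet a).ncard = 2 := hint a hamem hua.symm hav
  have hdegc : (Gᶜ.neighborSet c).ncard = 2 := hint c hcmem huc.symm hcv
  -- neighbor sets are exactly the path neighbors
  have hNa : Gᶜ.neighborSet a = {u, b} := by
    refine (Set.eq_of_subset_of_ncard_le ?_ ?_ (Set.toFinite _)).symm
    · rintro z (rfl | rfl)
      · exact hau
      · exact hab
    · rw [hdega, Set.ncard_pair hub]
  have hNc : Gᶜ.neighborSet c = {b, d} := by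
    refine (Set.eq_of_subset_of_ncard_le ?_ ?_ (Set.toFinite _)).symm
    · rintro z (rfl | rfl)
      · exact hcb
      · exact hcd
    · rw [hdegc, Set.ncard_pair hbd]
  -- a and c are adjacent in G
  have hGac : G.Adj a c := by
    by_contra hn
    have : Gᶜ.Adj a c := ⟨hac, hn⟩
    have : c ∈ Gᶜ.neighborSet a := this
    rw [hNa] at this
    rcases this with rfl | rfl
    · exact huc rfl
    · exact hbc rfl
  -- common neighbors
  have hsub : ({u, a, b, c, d} : Set V)ᶜ ⊆ G.commonNeighbors a c := by
    intro z hz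
    simp only [Set.mem_compl_iff, Set.mem_insert_iff, Set.mem_singleton_iff, not_or] at hz
    obtain ⟨hz1, hz2, hz3, hz4, hz5⟩ := hz
    constructor
    · by_contra hn
      have : Gᶜ.Adj a z := ⟨fun h => hz2 h.symm, hn⟩
      have : z ∈ Gᶜ.neighborSet a := this
      rw [hNa] at this
      rcases this with rfl | rfl
      · exact hz1 rfl
      · exact hz3 rfl
    · by_contra hn
      have : Gᶜ.Adj c z := ⟨fun h => hz4 h.symm, hn⟩
      have : z ∈ Gᶜ.neighborSet c := this
      rw [hNc] at this
      rcases this with rfl | rfl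
      · exact hz3 rfl
      · exact hz5 rfl
  -- counting
  have hcard5 : ({u, a, b, c, d} : Set V).ncard ≤ 5 := by
    apply le_trans (Set.ncard_insert_le _ _)
    apply Nat.succ_le_succ
    apply le_trans (Set.ncard_insert_le _ _)
    apply Nat.succ_le_succ
    apply le_trans (Set.ncard_insert_le _ _)
    apply Nat.succ_le_succ
    apply le_trans (Set.ncard_insert_le _ _)
    apply Nat.succ_le_succ
    simp [Set.ncard_singleton]
  have hcompl : p ≤ (({u, a, b, c, d} : Set V)ᶜ).ncard := by
    have := Set.ncard_add_ncard_compl ({u, a, b, c, d} : Set V)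
    rw [Nat.card_eq_fintype_card, hV] at this
    omega
  exact hfree ⟨a, c, hGac, le_trans hcompl (Set.ncard_le_ncard hsub (Set.toFinite _))⟩
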